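/- arXiv:1405.0446 — 4 statements merged into one kernel-verified Lean document; each statement's English description precedes it below -/
import Mathlib

section
/- In a cycle (i_1, i_2, ..., i_k, i_1) of a graph with an injective rank function r, if every vertex has at most one neighbor of lower rank among its neighbors on the cycle, and r(i_1) < r(i_2), then r(i_j) < r(i_{j+1}) for all j = 1, ..., k-1, which yields a contradiction with the edge (i_k, i_1). -/
/-- No cycle `c 0, c 1, ..., c (k-1), c 0` (with `k ≥ 3`, distinct vertices,
consecutive vertices adjacent, indices taken cyclically in `ZMod k`) can carry
an injective rank function `r` such that each vertex has at most one
cycle-neighbor of strictly smaller rank and `r (c 0) < r (c 1)`: from the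
hypotheses one gets `r (c j) < r (c (j+1))` for all `j = 0, ..., k-2`, which
contradicts the edge between `c (k-1)` and `c 0`. -/
theorem stmt4 {V : Type*} (G : SimpleGraph V) {k : ℕ} (hk : 3 ≤ k)
    (c : ZMod k → V) (hcinj : Function.Injective c)
    (hadj : ∀ j : ZMod k, G.Adj (c j) (c (j + 1)))
    (r : V → ℕ) (hrinj : Function.Injective (r ∘ c))
    (hcond : ∀ j : ZMod k, ¬(r (c (j - 1)) < r (c j) ∧ r (c (j + 1)) < r (c j)))
    (hstart : r (c 0) < r (c 1)) :
    (∀ j : ℕ, j + 1 < k → r (c (j : ZMod k)) < r (c ((j : ZMod k) + 1))) ∧ False := by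
  haveI : NeZero k := ⟨by omega⟩
  have hone : (1 : ZMod k) ≠ 0 := by
    intro h
    have h1 : ((1 : ℕ) : ZMod k) = ((0 : ℕ) : ZMod k) := by simpa using h
    have := (ZMod.natCast_eq_natCast_iff' 1 0 k).mp h1
    simp [Nat.mod_eq_of_lt (show 1 < k by omega)] at this
  have H : ∀ j : ℕ, j + 1 < k → r (c (j : ZMod k)) < r (c ((j : ZMod k) + 1)) := by
    intro j
    induction j with
    | zero => intro _; simpa using hstart
    | succ n ih =>
      intro hn
      have h1 : r (c (n : ZMod k)) < r (c ((n : ZMod k) + 1)) := ih (by omega)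
      have hc := hcond ((n : ZMod k) + 1)
      have hsub : ((n : ZMod k) + 1) - 1 = (n : ZMod k) := by ring
      rw [hsub] at hc
      have hne : r (c (((n : ZMod k) + 1) + 1)) ≠ r (c ((n : ZMod k) + 1)) := by
        intro h
        have heq := hrinj (show (r ∘ c) _ = (r ∘ c) _ from h)
        exact hone (by linear_combination heq)
      have hnlt : ¬ r (c (((n : ZMod k) + 1) + 1)) < r (c ((n : ZMod k) + 1)) :=
        fun hx => hc ⟨h1, hx⟩
      have : r (c ((n : ZMod k) + 1)) < r (c (((n : ZMod k) + 1) + 1)) := by omega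
      push_cast
      exact this
  refine ⟨H, ?_⟩
  have M : ∀ j : ℕ, 1 ≤ j → j < k → r (c 0) < r (c (j : ZMod k)) := by
    intro j
    induction j with
    | zero => omega
    | succ n ih =>
      intro _ hn
      by_cases h0 : n = 0
      · subst h0; simpa using hstart
      · have := ih (by omega) (by omega)
        have h2 := H n (by omega)
        push_cast
        omega
  have hcast1 : ((k - 1 : ℕ) : ZMod k) = -1 := by
    rw [Nat.cast_sub (by omega)]
    simp
  have hcast2 : ((k - 2 : ℕ) : ZMod k) = -1 - 1 := by
    rw [Nat.cast_sub (by omega)]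
    simp
    ring
  have hA := M (k - 1) (by omega) (by omega)
  rw [hcast1] at hA
  have hB := H (k - 2) (by omega)
  rw [hcast2] at hB
  have := hcond (-1)
  simp only [sub_add_cancel, neg_add_cancel] at this hB
  exact this ⟨hB, hA⟩
end

section
/- If L is a legal list of vertices of a finite simple graph G and vertex i ∉ L has exactly one neighbor v_j in L, then inserting i into L at the position immediately after v_j yields a legal list. -/
/-- A list `L` of vertices is *legal* if each vertex has at most one
neighbor preceding it in the list. -/
def IsLegal {V : Type*} (G : SimpleGraph V) [DecidableRel G.Adj] (L : List V) : Prop :=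
  ∀ i : Fin L.length, ((L.take i).filter (fun u => decide (G.Adj u (L.get i)))).length ≤ 1

/-- If a vertex `i` outside a legal list `L` has exactly one neighbor in `L`,
namely the one at position `j`, then inserting `i` immediately after that
position yields a legal list. -/
theorem stmt9 {V : Type*} [DecidableEq V] (G : SimpleGraph V) [DecidableRel G.Adj]
    (L : List V) (hnd : L.Nodup) (hlegal : IsLegal G L)
    (i : V) (hi : i ∉ L) (j : Fin L.length)
    (hadj : G.Adj (L.get j) i)
    (huniq : ∀ u ∈ L, G.Adj u i → u = L.get j) :
    IsLegal G (L.take (j + 1) ++ i :: L.drop (j + 1)) := by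
  unfold IsLegal at *
  intro k
  simp only [List.get_eq_getElem] at *
  have hjL : (j : ℕ) < L.length := j.isLt
  have hlen1 : (L.take ((j:ℕ)+1)).length = (j:ℕ)+1 := by
    rw [List.length_take]; omega
  have hklt : (k : ℕ) < L.length + 1 := by
    have := k.isLt
    simp only [List.length_append, hlen1, List.length_cons, List.length_drop] at this
    omega
  rcases lt_trichotomy (k : ℕ) ((j:ℕ)+1) with hk | hk | hk
  · -- k < j+1
    have hk' : (k:ℕ) < L.length := by omega
    have hget : (L.take ((j:ℕ)+1) ++ i :: L.drop ((j:ℕ)+1))[(k:ℕ)] = L[(k:ℕ)] := by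
      rw [List.getElem_append_left (by omega), List.getElem_take]
    have htake : (L.take ((j:ℕ)+1) ++ i :: L.drop ((j:ℕ)+1)).take (k:ℕ) = L.take (k:ℕ) := by
      rw [List.take_append, List.take_take]
      have : (k:ℕ) - (L.take ((j:ℕ)+1)).length = 0 := by omega
      rw [this, List.take_zero, List.append_nil]
      congr 1; omega
    simp only [htake, hget]
    exact hlegal ⟨k, hk'⟩
  · -- k = j+1
    have hget : (L.take ((j:ℕ)+1) ++ i :: L.drop ((j:ℕ)+1))[(k:ℕ)] = i := by
      rw [List.getElem_append_right (by omega)]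
      simp [hlen1, hk]
    have htake : (L.take ((j:ℕ)+1) ++ i :: L.drop ((j:ℕ)+1)).take (k:ℕ) = L.take ((j:ℕ)+1) := by
      rw [List.take_append, List.take_take]
      have : (k:ℕ) - (L.take ((j:ℕ)+1)).length = 0 := by omega
      rw [this, List.take_zero, List.append_nil]
      congr 1; omega
    simp only [htake, hget]
    rw [← List.countP_eq_length_filter]
    calc List.countP (fun u => decide (G.Adj u i)) (L.take ((j:ℕ)+1))
        ≤ List.countP (fun u => u == L[(j:ℕ)]) (L.take ((j:ℕ)+1)) := by
          apply List.countP_mono_left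
          intro x hx hpx
          simp only [decide_eq_true_eq] at hpx
          simp only [beq_iff_eq]
          exact huniq x (List.mem_of_mem_take hx) hpx
      _ ≤ 1 := by
          rw [← List.count]
          exact List.nodup_iff_count_le_one.1 ((List.take_sublist _ _).nodup hnd) _
  · -- k > j+1
    obtain ⟨m, hm⟩ : ∃ m, (k:ℕ) = m + 1 := ⟨(k:ℕ) - 1, by omega⟩
    simp only [hm]
    have hm1 : (j:ℕ) + 1 ≤ m := by omega
    have hm2 := hm
    have hmL : m < L.length := by omega
    have hget : (L.take ((j:ℕ)+1) ++ i :: L.drop ((j:ℕ)+1))[m+1] = L[m] := by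
      rw [List.getElem_append_right (by omega)]
      have h1 : m + 1 - (L.take ((j:ℕ)+1)).length = (m - ((j:ℕ)+1)) + 1 := by omega
      simp only [h1, List.getElem_cons_succ, List.getElem_drop]
      congr 1; omega
    have hni : ¬ G.Adj i L[m] := by
      intro h
      have := huniq L[m] (List.getElem_mem _) h.symm
      have hinj := List.nodup_iff_injective_get.1 hnd
      have : m = (j:ℕ) := by
        have := hinj (a₁ := ⟨m, hmL⟩) (a₂ := ⟨j, hjL⟩) (by simpa using this)
        simpa using congrArg Fin.val this
      omega
    have htake : (L.take ((j:ℕ)+1) ++ i :: L.drop ((j:ℕ)+1)).take (m+1)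
        = L.take ((j:ℕ)+1) ++ i :: (L.drop ((j:ℕ)+1)).take (m - ((j:ℕ)+1)) := by
      rw [List.take_append, List.take_take]
      have h1 : (m+1) ⊓ ((j:ℕ)+1) = (j:ℕ)+1 := by omega
      have h2 : m + 1 - (L.take ((j:ℕ)+1)).length = (m - ((j:ℕ)+1)) + 1 := by omega
      rw [h1, h2, List.take_succ_cons]
    have htakeL : L.take m = L.take ((j:ℕ)+1) ++ (L.drop ((j:ℕ)+1)).take (m - ((j:ℕ)+1)) := by
      conv_lhs => rw [← List.take_append_drop ((j:ℕ)+1) L]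
      rw [List.take_append, List.take_take]
      congr 2
      · omega
      · omega
    simp only [htake, hget]
    have := hlegal ⟨m, hmL⟩
    simp only [List.get_eq_getElem] at this
    rw [htakeL] at this
    simpa [List.filter_append, List.filter_cons, hni] using this
end

section
/- Let G be a finite simple graph, L a legal list, and i ∉ L a vertex with at least two neighbors in L, among which v_j has the lowest position. If i is inserted immediately after v_j and every neighbor of i in L whose ranking condition becomes violated is removed from the list, then the resulting list is legal. -/
lemma filter_take_indexOf {α : Type*} [DecidableEq α] (p : α → Bool) :
    ∀ (M : List α), M.Nodup → ∀ w ∈ M, p w = true →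
    (M.filter p).take ((M.filter p).idxOf w) = (M.take (M.idxOf w)).filter p := by
  intro M
  induction M with
  | nil => intro _ w hw; simp at hw
  | cons a M' ih =>
    intro hnd w hw hpw
    by_cases hpa : p a = true
    · rcases eq_or_ne w a with rfl | hne
      · simp [List.filter_cons, hpa]
      · have hwM' : w ∈ M' := by
          rcases List.mem_cons.mp hw with h | h
          · exact absurd h hne
          · exact h
        rw [List.filter_cons_of_pos hpa, List.idxOf_cons_ne _ hne.symm,
          List.idxOf_cons_ne _ hne.symm,
          List.take_succ_cons, List.take_succ_cons, List.filter_cons_of_pos hpa,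
          ih hnd.of_cons w hwM' hpw]
    · have hne : w ≠ a := by rintro rfl; exact hpa hpw
      have hwM' : w ∈ M' := by
        rcases List.mem_cons.mp hw with h | h
        · exact absurd h hne
        · exact h
      rw [List.filter_cons_of_neg hpa, List.idxOf_cons_ne _ hne.symm,
        List.take_succ_cons, List.filter_cons_of_neg hpa, ih hnd.of_cons w hwM' hpw]

lemma length_le_one_of_all_eq {α : Type*} {l : List α} (h : l.Nodup) (a : α)
    (ha : ∀ x ∈ l, x = a) : l.length ≤ 1 := by
  match l with
  | [] => simp
  | [x] => simp
  | x :: y :: l =>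
    exfalso
    have hx : x = a := ha x (by simp)
    have hy : y = a := ha y (by simp)
    simp [hx, hy] at h



/-- Let `i ∉ L` have at least two neighbors in the legal list `L`, with `L.get j`
its lowest-positioned neighbor.  Inserting `i` immediately after position `j`
and then deleting every neighbor of `i` (other than `L.get j`) whose ranking
condition becomes violated yields a legal list. -/
theorem stmt10 {V : Type*} [DecidableEq V] (G : SimpleGraph V) [DecidableRel G.Adj]
    (L : List V) (hnd : L.Nodup) (hlegal : IsLegal G L)
    (i : V) (hi : i ∉ L) (j : Fin L.length)
    (hadj : G.Adj (L.get j) i)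
    (hlow : ∀ k : Fin L.length, G.Adj (L.get k) i → j ≤ k)
    (htwo : ∃ k : Fin L.length, k ≠ j ∧ G.Adj (L.get k) i) :
    IsLegal G ((L.take (j + 1) ++ i :: L.drop (j + 1)).filter
      (fun w => decide ¬(G.Adj i w ∧ w ≠ L.get j ∧
        2 ≤ (((L.take (j + 1) ++ i :: L.drop (j + 1)).take
                ((L.take (j + 1) ++ i :: L.drop (j + 1)).idxOf w)).filter
              (fun u => decide (G.Adj u w))).length))) := by
  classical
  set A := L.take (↑j + 1) with hA
  set B := L.drop (↑j + 1) with hB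
  set M := A ++ i :: B with hM
  set p : V → Bool := fun w => decide ¬(G.Adj i w ∧ w ≠ L.get j ∧
        2 ≤ ((M.take (M.idxOf w)).filter (fun u => decide (G.Adj u w))).length) with hp
  set N := M.filter p with hN
  have hjL : (↑j : ℕ) < L.length := j.isLt
  have hAlen : A.length = ↑j + 1 := by
    rw [hA, List.length_take]; omega
  have hAB : A ++ B = L := List.take_append_drop _ _
  have hiA : i ∉ A := fun h => hi (List.take_subset _ _ h)
  have hMnd : M.Nodup := by
    rw [hM, List.nodup_middle, List.nodup_cons, hAB]
    exact ⟨hi, hnd⟩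
  have hNnd : N.Nodup := hMnd.filter p
  intro k
  set w := N.get k with hw
  have hwN : w ∈ N := List.get_mem N k
  have hidx : N.idxOf w = ↑k := by
    have h1 : N.idxOf w < N.length := List.idxOf_lt_length_iff.mpr hwN
    have h2 : N.get ⟨N.idxOf w, h1⟩ = N.get k := List.idxOf_get h1
    exact Fin.mk.injEq _ _ _ _ ▸ (List.Nodup.get_inj_iff hNnd).mp h2
  obtain ⟨hwM, hpw⟩ := List.mem_filter.mp hwN
  have key : ∀ m, M.take m = M.take (M.idxOf w) →
      ((M.take m).filter (fun u => decide (G.Adj u w))).length ≤ 1 →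
      ((N.take ↑k).filter (fun u => decide (G.Adj u w))).length ≤ 1 := by
    intro m hm hle
    rw [← hidx, hN, filter_take_indexOf p M hMnd w hwM hpw, ← hm]
    calc (((M.take m).filter p).filter (fun u => decide (G.Adj u w))).length
        ≤ ((M.take m).filter (fun u => decide (G.Adj u w))).length :=
          (((M.take m).filter_sublist).filter _).length_le
      _ ≤ 1 := hle
  by_cases hwi : w = i
  · -- w = i
    have hMidx : M.idxOf w = A.length := by
      rw [hwi, hM, List.idxOf_append_of_notMem hiA, List.idxOf_cons_self]
      omega
    refine key A.length (by rw [hMidx]) ?_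
    have hMA : M.take A.length = A := by rw [hM]; exact List.take_left
    rw [hMA]
    refine length_le_one_of_all_eq ((hnd.sublist (List.take_sublist _ _)).filter _)
      (L.get j) ?_
    intro x hx
    obtain ⟨hxA, hadjx⟩ := List.mem_filter.mp hx
    rw [hA] at hxA
    obtain ⟨n, hn, hxn⟩ := List.mem_iff_getElem.mp hxA
    rw [List.length_take] at hn
    have hnL : n < L.length := lt_of_lt_of_le hn (min_le_right _ _)
    have hnj : n < ↑j + 1 := lt_of_lt_of_le hn (min_le_left _ _)
    rw [List.getElem_take] at hxn
    have hadjn : G.Adj (L.get ⟨n, hnL⟩) i := by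
      rw [hwi] at hadjx
      simpa [hxn] using (of_decide_eq_true hadjx)
    have := hlow ⟨n, hnL⟩ hadjn
    have hnj' : n = ↑j := by
      have : (↑j : ℕ) ≤ n := this
      omega
    rw [← hxn]
    simp [hnj', List.get_eq_getElem]
  · -- w ∈ L
    have hwAB : w ∈ A ∨ w ∈ B := by
      rcases List.mem_append.mp (hM ▸ hwM) with h | h
      · exact Or.inl h
      · rcases List.mem_cons.mp h with h | h
        · exact absurd h hwi
        · exact Or.inr h
    by_cases hwA : w ∈ A
    · -- w in prefix
      have hMidx : M.idxOf w = A.idxOf w := by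
        rw [hM]; exact List.idxOf_append_of_mem hwA
      have hsA : A.idxOf w < A.length := List.idxOf_lt_length_iff.mpr hwA
      set s := A.idxOf w with hs
      have hsL : s < L.length := by omega
      refine key s (by rw [hMidx]) ?_
      have hMs : M.take s = L.take s := by
        rw [hM, List.take_append_of_le_length (le_of_lt hsA), hA, List.take_take,
          min_eq_left (by omega)]
      have hw_eq : L.get ⟨s, hsL⟩ = w := by
        have h1 : A.get ⟨s, hsA⟩ = w := List.idxOf_get hsA
        rw [← h1]
        simp [List.get_eq_getElem, hA, List.getElem_take]
      rw [hMs, ← hw_eq]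
      exact hlegal ⟨s, hsL⟩
    · have hwB : w ∈ B := hwAB.resolve_left hwA
      by_cases hadjiw : G.Adj i w
      · -- survived the filter: use p w directly
        have hLjA : L.get j ∈ A := by
          have hjA : (↑j : ℕ) < A.length := by omega
          have : A[(↑j : ℕ)] = L.get j := by
            simp [hA, List.getElem_take, List.get_eq_getElem]
          rw [← this]
          exact List.getElem_mem _
        have hnej : w ≠ L.get j := by
          intro h
          exact (List.disjoint_of_nodup_append (hAB ▸ hnd)) (h ▸ hLjA) hwB
        have hple := of_decide_eq_true hpw
        push_neg at hple
        have hcount := hple hadjiw hnej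
        refine key (M.idxOf w) rfl ?_
        omega
      · -- not adjacent to i : count unchanged from L
        have hbB : B.idxOf w < B.length := List.idxOf_lt_length_iff.mpr hwB
        set b := B.idxOf w with hb
        have hMidx : M.idxOf w = A.length + (b + 1) := by
          rw [hM, List.idxOf_append_of_notMem hwA,
            List.idxOf_cons_ne _ (Ne.symm hwi)]
        have ht : (↑j : ℕ) + 1 + b < L.length := by
          have : L.length = A.length + B.length := by rw [← hAB, List.length_append]
          omega
        refine key (A.length + (b + 1)) (by rw [hMidx]) ?_
        have hMt : M.take (A.length + (b + 1)) = A ++ i :: B.take b := by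
          rw [hM, List.take_length_add_append, List.take_succ_cons]
        have hperm : (M.take (A.length + (b + 1))).Perm (i :: (A ++ B.take b)) := by
          rw [hMt]; exact List.perm_middle
        rw [(hperm.filter _).length_eq, List.filter_cons_of_neg (by simpa using hadjiw)]
        have hTake : A ++ B.take b = L.take (↑j + 1 + b) := by
          rw [List.take_add, hA, hB]
        rw [hTake]
        have hw_eq : L.get ⟨↑j + 1 + b, ht⟩ = w := by
          have hLidx : L.idxOf w = ↑j + 1 + b := by
            have h := List.idxOf_append_of_notMem hwA (l₂ := B)
            rw [hAB] at h
            rw [h, hAlen]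
          have h1 := List.idxOf_get (a := w) (l := L) (by rw [hLidx]; exact ht)
          rw [← h1]
          congr 1
          simp [hLidx]
        rw [← hw_eq]
        exact hlegal ⟨↑j + 1 + b, ht⟩
end

section
/- For any finite simple undirected graph G, the minimum cardinality of a feedback vertex set equals |V(G)| minus the maximum cardinality of a vertex subset that admits a legal ordering. -/
open SimpleGraph

lemma support_getElem {V : Type*} {G : SimpleGraph V} {u v : V} (p : G.Walk u v)
    (i : ℕ) (h : i < p.support.length) : p.support[i] = p.getVert i := by
  induction p generalizing i with
  | nil =>
    simp only [Walk.support_nil, List.length_singleton] at h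
    interval_cases i
    simp [Walk.getVert]
  | cons ha q ih =>
    cases i with
    | zero => simp [Walk.getVert]
    | succ j =>
      have hj : j < q.support.length := by
        simpa [Walk.length_support] using h
      simpa [Walk.getVert_cons_succ] using ih j hj

lemma cycle_two_nbrs {V : Type*} {G : SimpleGraph V} {u : V} {c : G.Walk u u} (hc : c.IsCycle) :
    ∃ a b, a ≠ b ∧ a ≠ u ∧ b ≠ u ∧ G.Adj u a ∧ G.Adj u b ∧ a ∈ c.support ∧ b ∈ c.support := by
  have hn : 3 ≤ c.length := hc.three_le_length
  have hlen : c.support.tail.length = c.length := by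
    simp [Walk.length_support]
  have hget : ∀ j (h : j < c.support.tail.length), c.support.tail[j] = c.getVert (j + 1) := by
    intro j h
    rw [List.getElem_tail, support_getElem]
  have hnd : c.support.tail.Nodup := hc.2
  have key : ∀ i j, i < c.length → j < c.length → i ≠ j →
      c.getVert (i+1) ≠ c.getVert (j+1) := by
    intro i j hi hj hij
    have := (List.Nodup.getElem_inj_iff hnd (i := i) (j := j)
      (hi := by omega) (hj := by omega)).not.mpr ?_
    · rw [hget i (by omega), hget j (by omega)] at this
      exact this
    · exact hij
  refine ⟨c.getVert 1, c.getVert (c.length - 1), ?_, ?_, ?_, ?_, ?_, ?_, ?_⟩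
  · have := key 0 (c.length - 2) (by omega) (by omega) (by omega)
    simpa [show c.length - 2 + 1 = c.length - 1 by omega] using this
  · have := key 0 (c.length - 1) (by omega) (by omega) (by omega)
    simpa [show c.length - 1 + 1 = c.length by omega, c.getVert_length] using this
  · have := key (c.length - 2) (c.length - 1) (by omega) (by omega) (by omega)
    simpa [show c.length - 2 + 1 = c.length - 1 by omega,
      show c.length - 1 + 1 = c.length by omega, c.getVert_length] using this
  · have := c.adj_getVert_succ (i := 0) (by omega)
    simpa using this
  · have := c.adj_getVert_succ (i := c.length - 1) (by omega)
    rw [show c.length - 1 + 1 = c.length by omega, c.getVert_length] at this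
    exact this.symm
  · exact Walk.mem_support_iff_exists_getVert.mpr ⟨1, rfl, by omega⟩
  · exact Walk.mem_support_iff_exists_getVert.mpr ⟨c.length - 1, rfl, by omega⟩

lemma mem_take_of_indexOf {α} [DecidableEq α] {L : List α} {x : α} {n : ℕ}
    (hx : x ∈ L) (h : L.idxOf x < n) : x ∈ L.take n := by
  have hlt : L.idxOf x < L.length := List.idxOf_lt_length_iff.mpr hx
  have h1 : (L.take n)[L.idxOf x]'(by simp [List.length_take]; omega) = L[L.idxOf x] :=
    List.getElem_take
  rw [List.getElem_idxOf hlt] at h1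
  exact h1 ▸ List.getElem_mem _

lemma legal_acyclic {V : Type*} [DecidableEq V] {G : SimpleGraph V} [DecidableRel G.Adj]
    {L : List V} (hnd : L.Nodup) (hleg : IsLegal G L) :
    (G.induce {v | v ∈ L}).IsAcyclic := by
  intro v c hc
  obtain ⟨u, hu, hmax⟩ := c.support.toFinset.exists_max_image
    (fun x => L.idxOf (x : V)) ⟨v, by simp [c.start_mem_support]⟩
  rw [List.mem_toFinset] at hu
  have hc' := hc.rotate hu
  obtain ⟨a, b, hab, hau, hbu, huA, huB, haS, hbS⟩ := cycle_two_nbrs hc'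
  have hrot := c.support_rotate u hu
  -- any x in (c.rotate hu).support with x ≠ u is in c.support
  have hsub : ∀ x, x ∈ (c.rotate u hu).support → x ≠ u → x ∈ c.support := by
    intro x hx hxu
    rcases (Walk.mem_support_iff _).mp hx with h | h
    · exact absurd h hxu
    · exact List.mem_of_mem_tail (hrot.mem_iff.mp h)
  have haC := hsub a haS hau
  have hbC := hsub b hbS hbu
  -- indices
  have hcoe : ∀ x : {v | v ∈ L}, (x : V) ∈ L := fun x => x.2
  have hiu : L.idxOf (u : V) < L.length := List.idxOf_lt_length_iff.mpr (hcoe u)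
  have hgeti : L.get ⟨L.idxOf (u : V), hiu⟩ = (u : V) := List.idxOf_get hiu
  have hlt : ∀ x : {v | v ∈ L}, x ∈ c.support → x ≠ u →
      L.idxOf (x : V) < L.idxOf (u : V) := by
    intro x hx hxu
    have hle := hmax x (List.mem_toFinset.mpr hx)
    have hne : (x : V) ≠ (u : V) := fun h => hxu (Subtype.coe_injective h)
    have := (List.idxOf_inj (hcoe x)).not.mpr hne
    omega
  have hfin := hleg ⟨L.idxOf (u : V), hiu⟩
  set M := ((L.take (L.idxOf (u : V))).filter
    (fun w => decide (G.Adj w (L.get ⟨L.idxOf (u : V), hiu⟩)))) with hM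
  have hmem : ∀ x : {v | v ∈ L}, x ∈ c.support → x ≠ u →
      (G.induce {v | v ∈ L}).Adj u x → (x : V) ∈ M := by
    intro x hx hxu hadj
    refine List.mem_filter.mpr ⟨mem_take_of_indexOf (hcoe x) (hlt x hx hxu), ?_⟩
    rw [hgeti]
    simpa using ((hadj : G.Adj (u : V) (x : V)).symm)
  have haM := hmem a haC hau huA
  have hbM := hmem b hbC hbu huB
  have hMnd : M.Nodup := (List.filter_sublist.trans (List.take_sublist _ _)).nodup hnd
  have h2 : 2 ≤ M.length := by
    have hsub2 : ({(a : V), (b : V)} : Finset V) ⊆ M.toFinset := by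
      intro x hx
      rcases Finset.mem_insert.mp hx with rfl | hx
      · exact List.mem_toFinset.mpr haM
      · exact List.mem_toFinset.mpr (by simpa using (Finset.mem_singleton.mp hx ▸ hbM))
    have hcard : ({(a : V), (b : V)} : Finset V).card = 2 :=
      Finset.card_pair (fun h => hab (Subtype.coe_injective h))
    calc 2 = ({(a : V), (b : V)} : Finset V).card := hcard.symm
      _ ≤ M.toFinset.card := Finset.card_le_card hsub2
      _ = M.length := List.toFinset_card_of_nodup hMnd
  have hfin' : M.length ≤ 1 := hfin
  omega


lemma eq_snd_of_edge {V : Type*} {G : SimpleGraph V} {x y z : V} {p : G.Walk x y}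
    (hp : p.IsPath) (hz : s(x, z) ∈ p.edges) : z = p.getVert 1 := by
  cases p with
  | nil => simp at hz
  | cons ha q =>
    rw [Walk.edges_cons, List.mem_cons] at hz
    rw [Walk.cons_isPath_iff] at hp
    rcases hz with h | h
    · rw [Sym2.eq_iff] at h
      rcases h with ⟨-, rfl⟩ | ⟨h1, rfl⟩
      · rw [Walk.getVert_cons_succ, Walk.getVert_zero]
      · exact absurd h1 ha.ne
    · exact absurd (Walk.fst_mem_support_of_mem_edges q h) hp.2

lemma exists_leaf {V : Type*} [Fintype V] [Nonempty V] {G : SimpleGraph V}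
    (hG : G.IsAcyclic) : ∃ u : V, ∀ a b, G.Adj u a → G.Adj u b → a = b := by
  classical
  set N := {n : ℕ | ∃ (x y : V) (p : G.Walk x y), p.IsPath ∧ p.length = n} with hN
  have hbdd : BddAbove N := by
    refine ⟨Fintype.card V, fun n hn => ?_⟩
    obtain ⟨x, y, p, hp, rfl⟩ := hn
    have h1 : p.support.length ≤ Fintype.card V := hp.support_nodup.length_le_card
    rw [Walk.length_support] at h1
    omega
  have hne : N.Nonempty := ⟨0, Classical.arbitrary V, Classical.arbitrary V, Walk.nil, by simp, rfl⟩
  obtain ⟨x, y, p, hp, hlen⟩ := Nat.sSup_mem hne hbdd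
  refine ⟨x, fun a b haj hbj => ?_⟩
  by_contra hneq
  have hns : ∀ z, G.Adj x z → z ∈ p.support := by
    intro z hz
    by_contra hzs
    have hmem : p.length + 1 ∈ N := ⟨z, y, p.cons hz.symm, hp.cons hzs, by simp⟩
    have := le_csSup hbdd hmem
    omega
  have hlp : 1 ≤ p.length := by
    by_contra h
    obtain ⟨k, hk1, hk2⟩ := Walk.mem_support_iff_exists_getVert.mp (hns a haj)
    have hk0 : k = 0 := by omega
    subst hk0
    rw [Walk.getVert_zero] at hk1
    exact G.irrefl (hk1 ▸ haj)
  have hsadj : G.Adj x (p.getVert 1) := by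
    have := p.adj_getVert_succ (i := 0) (by omega)
    simpa using this
  have hcex : ∃ c, G.Adj x c ∧ c ≠ p.getVert 1 := by
    by_cases h : a = p.getVert 1
    · exact ⟨b, hbj, fun hb => hneq (h ▸ hb ▸ rfl)⟩
    · exact ⟨a, haj, h⟩
  obtain ⟨c, hcadj, hcs⟩ := hcex
  have hcsup : c ∈ p.support := hns c hcadj
  set q := p.takeUntil c hcsup with hq
  have hqp : q.IsPath := hp.takeUntil hcsup
  have he : s(x, c) ∉ q.edges := by
    intro he
    have he' : s(x, c) ∈ p.edges := p.edges_takeUntil_subset hcsup he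
    exact hcs (eq_snd_of_edge hp he')
  have hcyc := SimpleGraph.Path.cons_isCycle ⟨q.reverse, hqp.reverse⟩ hcadj
    (by simpa [Walk.edges_reverse] using he)
  exact hG _ hcyc

lemma acyclic_mono {V : Type*} {G : SimpleGraph V} {s t : Set V} (hst : s ⊆ t)
    (h : (G.induce t).IsAcyclic) : (G.induce s).IsAcyclic := by
  intro v c hc
  let f : G.induce s →g G.induce t := ⟨fun x => ⟨x.1, hst x.2⟩, fun hadj => hadj⟩
  have hinj : Function.Injective f := by
    intro a b hab
    have h2 : (⟨a.1, hst a.2⟩ : ↑t) = ⟨b.1, hst b.2⟩ := hab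
    exact Subtype.ext (congrArg (fun x : ↑t => (x : V)) h2)
  exact h _ ((Walk.map_isCycle_iff_of_injective hinj).mpr hc)

lemma acyclic_legal {V : Type*} [Fintype V] [DecidableEq V] (G : SimpleGraph V)
    [DecidableRel G.Adj] (W : Finset V) :
    (G.induce (↑W : Set V)).IsAcyclic → ∃ L : List V, L.Nodup ∧ IsLegal G L ∧ L.toFinset = W := by
  induction W using Finset.strongInduction with
  | _ W ih =>
    intro hac
    rcases W.eq_empty_or_nonempty with rfl | hWne
    · exact ⟨[], by simp, fun i => absurd i.2 (by simp), by simp⟩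
    · have hnonempty : Nonempty ↑(↑W : Set V) := ⟨⟨hWne.choose, hWne.choose_spec⟩⟩
      obtain ⟨u, hu⟩ := exists_leaf hac
      have hu0W : (u : V) ∈ W := u.2
      have hW' : W.erase ↑u ⊂ W := Finset.erase_ssubset hu0W
      have hsub : (↑(W.erase ↑u) : Set V) ⊆ ↑W :=
        Finset.coe_subset.mpr (Finset.erase_subset _ _)
      obtain ⟨L', hnd', hleg', hfin'⟩ := ih _ hW' (acyclic_mono hsub hac)
      have huL' : (u : V) ∉ L' := by
        rw [← List.mem_toFinset, hfin']
        simp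
      refine ⟨L' ++ [(u : V)], ?_, ?_, ?_⟩
      · simp [List.nodup_append, hnd', huL']
        intro a ha h
        exact huL' (h ▸ ha)
      · intro i
        have hlen : (L' ++ [(u : V)]).length = L'.length + 1 := by simp
        have hi2 : i.val < L'.length + 1 := by have h := i.2; simpa using h
        rcases lt_or_eq_of_le (Nat.lt_succ_iff.mp hi2) with hlt | heq
        · have hget : (L' ++ [(u : V)]).get i = L'.get ⟨i, hlt⟩ := by
            simp [List.getElem_append_left hlt]
          have htake : (L' ++ [(u : V)]).take i = L'.take i := by
            rw [List.take_append, Nat.sub_eq_zero_of_le (le_of_lt hlt)]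
            simp
          rw [hget, htake]
          exact hleg' ⟨i, hlt⟩
        · have hget : (L' ++ [(u : V)]).get i = (u : V) := by
            rcases i with ⟨iv, hiv⟩
            simp only at heq ⊢
            subst heq
            rw [List.get_eq_getElem, List.getElem_append_right (le_refl _)]
            simp
          have htake : (L' ++ [(u : V)]).take i = L' := by
            rw [heq]
            exact List.take_left
          rw [hget, htake]
          set F := L'.filter (fun w => decide (G.Adj w ↑u)) with hF
          by_contra hcon
          have h1 : 1 < F.length := by omega
          have h0 : 0 < F.length := by omega
          have hFnd : F.Nodup := hnd'.filter _
          have hmemW : ∀ x, x ∈ F → x ∈ W ∧ G.Adj x ↑u := by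
            intro x hx
            obtain ⟨hx1, hx2⟩ := List.mem_filter.mp hx
            refine ⟨?_, by simpa using hx2⟩
            have := List.mem_toFinset.mpr hx1
            rw [hfin'] at this
            exact Finset.mem_of_mem_erase this
          obtain ⟨hW0, hadj0⟩ := hmemW _ (F.getElem_mem h0)
          obtain ⟨hW1, hadj1⟩ := hmemW _ (F.getElem_mem h1)
          have heq2 : (⟨F[0], hW0⟩ : ↑(↑W : Set V)) = ⟨F[1], hW1⟩ :=
            hu _ _ hadj0.symm hadj1.symm
          have : F[0] = F[1] := congrArg Subtype.val heq2
          have := (List.Nodup.getElem_inj_iff hFnd).mp this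
          omega
      · rw [List.toFinset_append, hfin']
        ext x
        by_cases h : x = ↑u <;> simp [h, hu0W]


/-- The minimum cardinality of a feedback vertex set equals the number of
vertices minus the maximum cardinality of a subset admitting a legal ordering. -/
theorem stmt11 {V : Type*} [Fintype V] [DecidableEq V] (G : SimpleGraph V) [DecidableRel G.Adj] :
    sInf {n : ℕ | ∃ S : Finset V, (G.induce ((↑S : Set V))ᶜ).IsAcyclic ∧ S.card = n} =
      Fintype.card V -
        sSup {n : ℕ | ∃ L : List V, L.Nodup ∧ IsLegal G L ∧ L.length = n} := by
  set B := {n : ℕ | ∃ L : List V, L.Nodup ∧ IsLegal G L ∧ L.length = n} with hB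
  have hBub : ∀ n ∈ B, n ≤ Fintype.card V := by
    rintro n ⟨L, hnd, -, rfl⟩
    exact hnd.length_le_card
  have hBbdd : BddAbove B := ⟨Fintype.card V, hBub⟩
  have hBne : B.Nonempty := ⟨0, [], by simp, fun i => absurd i.2 (by simp), rfl⟩
  set m := sSup B with hm
  have hmB : m ∈ B := Nat.sSup_mem hBne hBbdd
  have hmle : m ≤ Fintype.card V := csSup_le hBne hBub
  obtain ⟨L, hnd, hleg, hlen⟩ := hmB
  -- membership of `card V - m` in the inf set
  have hseteq : ((↑(L.toFinsetᶜ) : Set V))ᶜ = {v | v ∈ L} := by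
    ext x
    simp
  have hmem : Fintype.card V - m ∈
      {n : ℕ | ∃ S : Finset V, (G.induce ((↑S : Set V))ᶜ).IsAcyclic ∧ S.card = n} := by
    refine ⟨L.toFinsetᶜ, ?_, ?_⟩
    · rw [hseteq]
      exact legal_acyclic hnd hleg
    · rw [Finset.card_compl, List.toFinset_card_of_nodup hnd, hlen]
  refine le_antisymm (Nat.sInf_le hmem) (le_csInf ⟨_, hmem⟩ ?_)
  rintro n ⟨S, hac, rfl⟩
  have hcompl : ((↑(Sᶜ) : Set V)) = ((↑S : Set V))ᶜ := Finset.coe_compl S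
  obtain ⟨L', hnd', hleg', hfin'⟩ := acyclic_legal G Sᶜ (by rw [hcompl]; exact hac)
  have hlen' : L'.length = Sᶜ.card := by
    rw [← hfin', List.toFinset_card_of_nodup hnd']
  have hmemB : L'.length ∈ B := ⟨L', hnd', hleg', rfl⟩
  have h1 : L'.length ≤ m := le_csSup hBbdd hmemB
  have h2 : Sᶜ.card = Fintype.card V - S.card := Finset.card_compl S
  have h3 : S.card ≤ Fintype.card V := Finset.card_le_univ S
  omega
end
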